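/- (Kolotilina's second bound.) Let G be a finite simple graph on n vertices with at least one edge and chromatic number χ. Then μ_1 ≤ (χ − 1)·(μ_1 − δ_n + θ_n); equivalently, χ ≥ 1 + μ_1/(μ_1 − δ_n + θ_n), where θ_n = 0. -/

import Mathlib

open Matrix Finset Real

section KolAux

lemma kol_psd_sub {m : ℕ} {M : Matrix (Fin m) (Fin m) ℝ} (hM : M.IsHermitian)
    {t : ℝ} (ht : ∀ i, t ≤ hM.eigenvalues i) : (M - t • 1).PosSemidef := by
  have hU : (hM.eigenvectorUnitary : Matrix (Fin m) (Fin m) ℝ) *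
      star (hM.eigenvectorUnitary : Matrix (Fin m) (Fin m) ℝ) = 1 :=
    Matrix.mem_unitaryGroup_iff.mp hM.eigenvectorUnitary.2
  have hd : Matrix.diagonal (RCLike.ofReal ∘ hM.eigenvalues) - t • (1 : Matrix (Fin m) (Fin m) ℝ)
      = Matrix.diagonal (fun i => hM.eigenvalues i - t) := by
    ext i j
    by_cases h : i = j <;>
      simp [h, Matrix.diagonal_apply, Matrix.one_apply, RCLike.ofReal_real_eq_id]
  have key : M - t • 1 = (hM.eigenvectorUnitary : Matrix (Fin m) (Fin m) ℝ) *
      Matrix.diagonal (fun i => hM.eigenvalues i - t) *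
      (hM.eigenvectorUnitary : Matrix (Fin m) (Fin m) ℝ)ᴴ := by
    rw [← Matrix.star_eq_conjTranspose, ← hd, Matrix.mul_sub, Matrix.sub_mul,
      Matrix.mul_smul, mul_one, Matrix.smul_mul, hU,
      ← Unitary.conjStarAlgAut_apply (S := ℝ), ← hM.spectral_theorem]
  rw [key]
  exact (Matrix.posSemidef_diagonal_iff.mpr
    (fun i => sub_nonneg.mpr (ht i))).mul_mul_conjTranspose_same _

lemma kol_psd_sub' {m : ℕ} {M : Matrix (Fin m) (Fin m) ℝ} (hM : M.IsHermitian)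
    {t : ℝ} (ht : ∀ i, hM.eigenvalues i ≤ t) : (t • 1 - M).PosSemidef := by
  have hU : (hM.eigenvectorUnitary : Matrix (Fin m) (Fin m) ℝ) *
      star (hM.eigenvectorUnitary : Matrix (Fin m) (Fin m) ℝ) = 1 :=
    Matrix.mem_unitaryGroup_iff.mp hM.eigenvectorUnitary.2
  have hd : t • (1 : Matrix (Fin m) (Fin m) ℝ) - Matrix.diagonal (RCLike.ofReal ∘ hM.eigenvalues)
      = Matrix.diagonal (fun i => t - hM.eigenvalues i) := by
    ext i j
    by_cases h : i = j <;>
      simp [h, Matrix.diagonal_apply, Matrix.one_apply, RCLike.ofReal_real_eq_id]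
  have key : t • 1 - M = (hM.eigenvectorUnitary : Matrix (Fin m) (Fin m) ℝ) *
      Matrix.diagonal (fun i => t - hM.eigenvalues i) *
      (hM.eigenvectorUnitary : Matrix (Fin m) (Fin m) ℝ)ᴴ := by
    rw [← Matrix.star_eq_conjTranspose, ← hd, Matrix.mul_sub, Matrix.sub_mul,
      Matrix.mul_smul, mul_one, Matrix.smul_mul, hU,
      ← Unitary.conjStarAlgAut_apply (S := ℝ), ← hM.spectral_theorem]
  rw [key]
  exact (Matrix.posSemidef_diagonal_iff.mpr
    (fun i => sub_nonneg.mpr (ht i))).mul_mul_conjTranspose_same _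

lemma kol_quad_eq {m : ℕ} (M : Matrix (Fin m) (Fin m) ℝ) (x : Fin m → ℝ) :
    x ⬝ᵥ M *ᵥ x = ∑ u, ∑ v, M u v * (x u * x v) := by
  simp only [dotProduct, mulVec, Finset.mul_sum]
  exact Finset.sum_congr rfl fun u _ => Finset.sum_congr rfl fun v _ => by ring

lemma kol_quad_lower {m : ℕ} {M : Matrix (Fin m) (Fin m) ℝ} {t : ℝ}
    (hP : (M - t • 1).PosSemidef) (x : Fin m → ℝ) :
    t * (∑ v, x v * x v) ≤ ∑ u, ∑ v, M u v * (x u * x v) := by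
  have h := hP.dotProduct_mulVec_nonneg x
  rw [star_trivial, Matrix.sub_mulVec, dotProduct_sub, Matrix.smul_mulVec,
    Matrix.one_mulVec, dotProduct_smul] at h
  rw [← kol_quad_eq]
  have h2 : x ⬝ᵥ x = ∑ v, x v * x v := rfl
  rw [← h2]
  simpa [smul_eq_mul] using h

lemma kol_quad_upper {m : ℕ} {M : Matrix (Fin m) (Fin m) ℝ} {t : ℝ}
    (hP : (t • 1 - M).PosSemidef) (x : Fin m → ℝ) :
    ∑ u, ∑ v, M u v * (x u * x v) ≤ t * (∑ v, x v * x v) := by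
  have h := hP.dotProduct_mulVec_nonneg x
  rw [star_trivial, Matrix.sub_mulVec, dotProduct_sub, Matrix.smul_mulVec,
    Matrix.one_mulVec, dotProduct_smul] at h
  rw [← kol_quad_eq]
  have h2 : x ⬝ᵥ x = ∑ v, x v * x v := rfl
  rw [← h2]
  simpa [smul_eq_mul] using h

lemma kol_trig {k : ℕ} (hk : 0 < k) (a b : ℕ) (ha : a < k) (hb : b < k) :
    ∑ s ∈ Finset.range k, Real.cos (2*π*s*a/k - 2*π*s*b/k)
      = if a = b then (k : ℝ) else 0 := by
  by_cases hab : a = b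
  · simp [hab]
  · simp only [hab, if_false]
    set t : ℤ := (a : ℤ) - b with hts
    have ht0 : t ≠ 0 := by omega
    have htlt : |t| < (k : ℤ) := by rw [abs_lt]; omega
    have hangle : ∀ s : ℕ, 2*π*s*a/k - 2*π*s*b/k = s * (2*π*t/k) := by
      intro s; push_cast [hts]; field_simp
    simp_rw [hangle]
    set θ : ℝ := 2*π*t/k with hθ
    have hre : ∀ s : ℕ, Real.cos (s*θ) = ((Complex.exp ((θ:ℂ)*Complex.I))^s).re := by
      intro s
      rw [← Complex.exp_nat_mul]
      have h3 : (s:ℂ) * ((θ:ℂ)*Complex.I) = (((s*θ : ℝ)):ℂ)*Complex.I := by push_cast; ring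
      rw [h3, Complex.exp_ofReal_mul_I_re]
    simp_rw [hre]
    rw [← Complex.re_sum]
    have hz1 : Complex.exp ((θ:ℂ)*Complex.I) ≠ 1 := by
      intro h
      obtain ⟨n, hn⟩ := Complex.exp_eq_one_iff.mp h
      have h4 : (θ:ℂ) * Complex.I = ((2*(π:ℂ)*n)) * Complex.I := by rw [hn]; ring
      have h5 := mul_right_cancel₀ Complex.I_ne_zero h4
      have hθeq : θ = 2*π*n := by exact_mod_cast h5
      rw [hθ] at hθeq
      have hk0 : (k:ℝ) ≠ 0 := by positivity
      have hpi : (2*π) ≠ 0 := by positivity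
      have : (t:ℝ) = n * k := by
        field_simp at hθeq
        nlinarith [Real.pi_pos]
      have ht : t = n * k := by exact_mod_cast this
      have := Int.eq_zero_of_abs_lt_dvd ⟨n, by rw [ht, mul_comm]⟩ htlt
      exact ht0 this
    have hzk : (Complex.exp ((θ:ℂ)*Complex.I))^k = 1 := by
      rw [← Complex.exp_nat_mul]
      have : (k:ℂ) * ((θ:ℂ)*Complex.I) = (t:ℂ) * (2*(π:ℂ)*Complex.I) := by
        rw [hθ]
        have hk0 : (k:ℂ) ≠ 0 := by exact_mod_cast Nat.cast_ne_zero.mpr hk.ne'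
        push_cast
        field_simp
      rw [this]
      exact_mod_cast Complex.exp_int_mul_two_pi_mul_I t
    rw [geom_sum_eq hz1, hzk, sub_self, zero_div, Complex.zero_re]

end KolAux

/-- **Kolotilina's second bound.** For a finite simple graph `G` on `n` vertices with at least
one edge and chromatic number `χ`, `μ_1 ≤ (χ - 1)·(μ_1 - δ_n + θ_n)`; equivalently
`χ ≥ 1 + μ_1/(μ_1 - δ_n + θ_n)`, where `θ_n = 0`.  Here `μ`, `θ`, `δ` are the non-increasing
enumerations of the eigenvalues of the adjacency matrix, the Laplacian `L = D - A` and the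
signless Laplacian `Q = D + A`, respectively. -/
theorem stmt_6 {n : ℕ} (hn : 0 < n) (G : SimpleGraph (Fin n)) [DecidableRel G.Adj]
    (he : ∃ v w : Fin n, G.Adj v w)
    (χ : ℕ) (hχ : G.chromaticNumber = (χ : ℕ∞))
    (hA : (G.adjMatrix ℝ).IsHermitian)
    (hL : (G.lapMatrix ℝ).IsHermitian)
    (hQ : (G.degMatrix ℝ + G.adjMatrix ℝ).IsHermitian)
    (μ θ δ : Fin n → ℝ)
    (hμa : Antitone μ) (hμ : ∃ e : Equiv.Perm (Fin n), μ = hA.eigenvalues ∘ e)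
    (hθa : Antitone θ) (hθ : ∃ e : Equiv.Perm (Fin n), θ = hL.eigenvalues ∘ e)
    (hδa : Antitone δ) (hδ : ∃ e : Equiv.Perm (Fin n), δ = hQ.eigenvalues ∘ e) :
    μ ⟨0, hn⟩ ≤ ((χ : ℝ) - 1) *
        (μ ⟨0, hn⟩ - δ ⟨n - 1, by omega⟩ + θ ⟨n - 1, by omega⟩) ∧
    (χ : ℝ) ≥ 1 + μ ⟨0, hn⟩ /
        (μ ⟨0, hn⟩ - δ ⟨n - 1, by omega⟩ + θ ⟨n - 1, by omega⟩) ∧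
    θ ⟨n - 1, by omega⟩ = 0 := by
  classical
  obtain ⟨v0, w0, hvw⟩ := he
  obtain ⟨eμ, hμe⟩ := hμ
  obtain ⟨eθ, hθe⟩ := hθ
  obtain ⟨eδ, hδe⟩ := hδ
  set z : Fin n := ⟨0, hn⟩ with hz
  set l : Fin n := ⟨n - 1, by omega⟩ with hl
  have hbot : ∀ j : Fin n, z ≤ j := fun j => by simp [hz, Fin.le_def]
  have htop : ∀ j : Fin n, j ≤ l := fun j => by
    simp only [hl, Fin.le_def]; omega
  set μ0 : ℝ := μ z with hμ0
  set δl : ℝ := δ l with hδl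
  set θl : ℝ := θ l with hθl
  -- extremal properties
  have hμtop : ∀ i, hA.eigenvalues i ≤ μ0 := by
    intro i
    have : hA.eigenvalues i = μ (eμ.symm i) := by rw [hμe]; simp
    rw [this]; exact hμa (hbot _)
  have hδbot : ∀ i, δl ≤ hQ.eigenvalues i := by
    intro i
    have : hQ.eigenvalues i = δ (eδ.symm i) := by rw [hδe]; simp
    rw [this]; exact hδa (htop _)
  have hθbot : ∀ i, θl ≤ hL.eigenvalues i := by
    intro i
    have : hL.eigenvalues i = θ (eθ.symm i) := by rw [hθe]; simp
    rw [this]; exact hθa (htop _)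
  -- θl = 0
  have hLpsd : (G.lapMatrix ℝ).PosSemidef := SimpleGraph.posSemidef_lapMatrix ℝ G
  have hθl0 : θl = 0 := by
    have h1 : 0 ≤ θl := by
      have : θl = hL.eigenvalues (eθ l) := by rw [hθl, hθe]; simp
      rw [this]; exact hLpsd.eigenvalues_nonneg _
    have hdet : (G.lapMatrix ℝ).det = 0 := by
      rw [← Matrix.exists_mulVec_eq_zero_iff]
      refine ⟨fun _ => 1, ?_, SimpleGraph.lapMatrix_mulVec_const_eq_zero G⟩
      intro h0
      have := congrFun h0 z
      simp at this
    have hprod : ∏ i, hL.eigenvalues i = 0 := by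
      have := hL.det_eq_prod_eigenvalues
      rw [hdet] at this
      exact_mod_cast this.symm
    obtain ⟨i, _, hi⟩ := Finset.prod_eq_zero_iff.mp hprod
    have h2 : θl ≤ 0 := hi ▸ hθbot i
    linarith
  -- coloring
  have hcol : G.Colorable χ := SimpleGraph.chromaticNumber_le_iff_colorable.mp (le_of_eq hχ)
  obtain ⟨C⟩ := hcol
  have hCvw : C v0 ≠ C w0 := C.valid hvw
  have hk2 : 2 ≤ χ := by
    by_contra hlt
    push_neg at hlt
    interval_cases χ
    · exact (C v0).elim0
    · exact hCvw (Subsingleton.elim _ _)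
  have hkpos : 0 < χ := by omega
  -- matrices
  set A : Matrix (Fin n) (Fin n) ℝ := G.adjMatrix ℝ with hAdef
  set Q : Matrix (Fin n) (Fin n) ℝ := G.degMatrix ℝ + G.adjMatrix ℝ with hQdef
  have hQP : (Q - δl • 1).PosSemidef := kol_psd_sub hQ hδbot
  have hAP : (μ0 • 1 - A).PosSemidef := kol_psd_sub' hA hμtop
  -- row sums of A
  have hrow : ∀ u, ∑ v, A u v = (G.degree u : ℝ) := by
    intro u
    simp [hAdef, SimpleGraph.adjMatrix_apply, SimpleGraph.degree,
      SimpleGraph.neighborFinset_eq_filter, Finset.sum_boole]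
  set T : ℝ := ∑ v, (G.degree v : ℝ) with hT
  have hT0 : 0 ≤ T := Finset.sum_nonneg fun v _ => by positivity
  -- μ0 ≥ 1
  have hne : v0 ≠ w0 := G.ne_of_adj hvw
  set x0 : Fin n → ℝ := fun u => (if u = v0 then 1 else 0) + (if u = w0 then 1 else 0) with hx0
  have inner : ∀ (f : Fin n → ℝ), ∑ v, f v * x0 v = f v0 + f w0 := by
    intro f
    simp only [hx0, mul_add, mul_ite, mul_one, mul_zero, Finset.sum_add_distrib,
      Finset.sum_ite_eq', Finset.mem_univ, if_true]
  have hx0norm : ∑ v, x0 v * x0 v = 2 := by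
    rw [inner x0]
    simp only [hx0, if_pos rfl, if_neg hne, if_neg (Ne.symm hne), if_neg hne.symm]
    norm_num
  have hS0 : ∑ u, ∑ v, A u v * (x0 u * x0 v) = 2 := by
    have h1 : ∀ u, ∑ v, A u v * (x0 u * x0 v) = (A u v0 + A u w0) * x0 u := by
      intro u
      have h2 : ∀ v, A u v * (x0 u * x0 v) = (fun v => x0 u * A u v) v * x0 v := fun v => by ring
      rw [Finset.sum_congr rfl fun v _ => h2 v, inner (fun v => x0 u * A u v)]
      ring
    rw [Finset.sum_congr rfl fun u _ => h1 u, inner (fun u => A u v0 + A u w0)]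
    simp [hAdef, SimpleGraph.adjMatrix_apply, hvw, hvw.symm, G.irrefl]
    norm_num
  have hμ0pos : (1:ℝ) ≤ μ0 := by
    have := kol_quad_upper hAP x0
    rw [hS0, hx0norm] at this
    linarith
  -- the spectral sum identity
  set fv : ℕ → Fin n → ℝ := fun s v => Real.cos (2*π*s*((C v : ℕ))/χ) with hfv
  set gv : ℕ → Fin n → ℝ := fun s v => Real.sin (2*π*s*((C v : ℕ))/χ) with hgv
  set P : ℕ → ℝ := fun s => (∑ u, ∑ v, Q u v * (fv s u * fv s v))
      + (∑ u, ∑ v, Q u v * (gv s u * gv s v)) with hP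
  -- each P s ≥ δl * n
  have hPlow : ∀ s : ℕ, δl * n ≤ P s := by
    intro s
    have h1 := kol_quad_lower hQP (fv s)
    have h2 := kol_quad_lower hQP (gv s)
    have hnorm : (∑ v, fv s v * fv s v) + (∑ v, gv s v * gv s v) = n := by
      rw [← Finset.sum_add_distrib]
      have : ∀ v : Fin n, fv s v * fv s v + gv s v * gv s v = 1 := by
        intro v
        simp only [hfv, hgv]
        linear_combination Real.sin_sq_add_cos_sq (2*π*s*((C v : ℕ))/χ)
      rw [Finset.sum_congr rfl fun v _ => this v]
      simp
    simp only [hP]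
    calc δl * n = δl * (∑ v, fv s v * fv s v) + δl * (∑ v, gv s v * gv s v) := by
          rw [← mul_add, hnorm]
      _ ≤ _ := by exact add_le_add h1 h2
  -- total sum over range χ
  have hQdiag : ∀ u v : Fin n, Q u v * (if ((C u : ℕ)) = ((C v : ℕ)) then (χ:ℝ) else 0)
      = if u = v then (χ:ℝ) * (G.degree v : ℝ) else 0 := by
    intro u v
    by_cases huv : u = v
    · subst huv
      simp [hQdef, SimpleGraph.degMatrix, Matrix.diagonal_apply_eq,
        SimpleGraph.adjMatrix_apply, G.irrefl, mul_comm]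
    · by_cases hc : C u = C v
      · have hnadj : ¬ G.Adj u v := fun h => (C.valid h) hc
        simp [huv, hQdef, SimpleGraph.degMatrix, Matrix.diagonal_apply_ne _ huv,
          SimpleGraph.adjMatrix_apply, hnadj]
      · have : ¬ ((C u : ℕ) = (C v : ℕ)) := fun h => hc (Fin.val_injective h)
        simp [this, huv]
  have hsumall : ∑ s ∈ Finset.range χ, P s = (χ:ℝ) * T := by
    have step1 : ∀ s, P s = ∑ u, ∑ v, Q u v *
        Real.cos (2*π*s*((C u : ℕ))/χ - 2*π*s*((C v : ℕ))/χ) := by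
      intro s
      simp only [hP]
      rw [← Finset.sum_add_distrib]
      refine Finset.sum_congr rfl fun u _ => ?_
      rw [← Finset.sum_add_distrib]
      refine Finset.sum_congr rfl fun v _ => ?_
      rw [Real.cos_sub]
      simp only [hfv, hgv]
      ring
    rw [Finset.sum_congr rfl fun s _ => step1 s, Finset.sum_comm]
    have step2 : ∀ u : Fin n, ∑ s ∈ Finset.range χ, ∑ v, Q u v *
        Real.cos (2*π*s*((C u : ℕ))/χ - 2*π*s*((C v : ℕ))/χ)
        = ∑ v, if u = v then (χ:ℝ) * (G.degree v : ℝ) else 0 := by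
      intro u
      rw [Finset.sum_comm]
      refine Finset.sum_congr rfl fun v _ => ?_
      rw [← Finset.mul_sum, kol_trig hkpos _ _ (C u).isLt (C v).isLt, hQdiag]
    rw [Finset.sum_congr rfl fun u _ => step2 u]
    simp only [Finset.sum_ite_eq, Finset.mem_univ, if_true]
    rw [hT, Finset.mul_sum]
  -- s = 0 term
  have hP0 : P 0 = 2 * T := by
    have hf0 : ∀ v, fv 0 v = 1 := by intro v; simp [hfv]
    have hg0 : ∀ v, gv 0 v = 0 := by intro v; simp [hgv]
    have hQrow : ∀ u, ∑ v, Q u v = (G.degree u : ℝ) + (G.degree u : ℝ) := by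
      intro u
      simp only [hQdef, Matrix.add_apply]
      rw [Finset.sum_add_distrib]
      have hd : ∑ v, G.degMatrix ℝ u v = (G.degree u : ℝ) := by
        simp [SimpleGraph.degMatrix, Matrix.diagonal_apply, Finset.sum_ite_eq,
          Finset.mem_univ]
      rw [hd, hrow u]
    simp only [hP, hf0, hg0, mul_one, one_mul, mul_zero, Finset.sum_const_zero, add_zero]
    rw [Finset.sum_congr rfl fun u _ => hQrow u, Finset.sum_add_distrib, hT]
    ring
  -- sum over Ico 1 χ
  have hIco : ∑ s ∈ Finset.Ico 1 χ, P s = ((χ:ℝ) - 2) * T := by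
    have := Finset.sum_Ico_eq_sub P (by omega : 1 ≤ χ)
    rw [Finset.sum_range_one, hsumall, hP0] at this
    rw [this]
    ring
  -- main inequality
  have hcard : (Finset.Ico 1 χ).card = χ - 1 := by simp
  have hmain : ((χ:ℝ) - 1) * (δl * n) ≤ ((χ:ℝ) - 2) * T := by
    have h := Finset.card_nsmul_le_sum (Finset.Ico 1 χ) P (δl * n)
      (fun s _ => hPlow s)
    rw [hcard, hIco] at h
    have hcast : ((χ - 1 : ℕ) : ℝ) = (χ:ℝ) - 1 := by
      push_cast [Nat.cast_sub (by omega : 1 ≤ χ)]; ring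
    rw [nsmul_eq_mul, hcast] at h
    exact h
  -- T ≤ μ0 * n
  have hTμ : T ≤ μ0 * n := by
    have h := kol_quad_upper hAP (fun _ => 1)
    simp only [mul_one, one_mul] at h
    have hl1 : ∑ u, ∑ v, A u v = T := by
      rw [Finset.sum_congr rfl fun u _ => hrow u, hT]
    have hr1 : (∑ _v : Fin n, (1:ℝ)) = n := by simp
    rw [hl1, hr1] at h
    exact h
  have hχR : (2:ℝ) ≤ (χ:ℝ) := by exact_mod_cast hk2
  have hnR : (0:ℝ) < n := by exact_mod_cast hn
  -- (χ-1) δl ≤ (χ-2) μ0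
  have hkey : ((χ:ℝ) - 1) * δl ≤ ((χ:ℝ) - 2) * μ0 := by
    have h1 : ((χ:ℝ) - 2) * T ≤ ((χ:ℝ) - 2) * (μ0 * n) :=
      mul_le_mul_of_nonneg_left hTμ (by linarith)
    have h2 : ((χ:ℝ) - 1) * (δl * n) ≤ ((χ:ℝ) - 2) * (μ0 * n) := le_trans hmain h1
    nlinarith [h2, hnR]
  have goal1 : μ0 ≤ ((χ:ℝ) - 1) * (μ0 - δl + θl) := by
    rw [hθl0]
    nlinarith [hkey, hμ0pos, hχR]
  refine ⟨goal1, ?_, hθl0⟩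
  have hβ : 0 < μ0 - δl + θl := by
    nlinarith [goal1, hμ0pos, hχR]
  rw [ge_iff_le]
  have hdiv : μ0 / (μ0 - δl + θl) ≤ (χ:ℝ) - 1 := by
    rw [div_le_iff₀ hβ]
    calc μ0 ≤ ((χ:ℝ) - 1) * (μ0 - δl + θl) := goal1
      _ = _ := by ring
  linarith
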